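/- Let (S, I) solve the SIR system S' = -β(t)SI - α(t)S, I' = β(t)SI - γ(t)I with continuous rates β ∈ [β₁, β₂], γ ∈ [γ₁, γ₂] (positive bounds), control α ∈ [0,1], and initial data x, y ≥ 0. Then lim_{t→∞} I(t) = 0. -/

import Mathlib

open Set Filter

/-- Sign preservation for a scalar linear ODE `u' = c·u` with locally bounded coefficient. -/
lemma nonneg_of_linear_ode (u c : ℝ → ℝ)
    (hu : ∀ t ∈ Set.Ici (0:ℝ), HasDerivAt u (c t * u t) t)
    (hc : ∀ b : ℝ, ∃ K : ℝ, ∀ t ∈ Set.Icc (0:ℝ) b, |c t| ≤ K)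
    (h0 : 0 ≤ u 0) : ∀ t ∈ Set.Ici (0:ℝ), 0 ≤ u t := by
  have hcont : ContinuousOn u (Set.Ici (0:ℝ)) :=
    fun t ht => ((hu t ht).continuousAt).continuousWithinAt
  by_contra h
  push_neg at h
  obtain ⟨t₀, ht₀, hneg⟩ := h
  have ht₀' : (0:ℝ) ≤ t₀ := ht₀
  set A : Set ℝ := Set.Icc 0 t₀ ∩ u ⁻¹' (Set.Ici 0) with hA
  have hA0 : (0:ℝ) ∈ A := ⟨⟨le_refl 0, ht₀'⟩, h0⟩
  have hAne : A.Nonempty := ⟨0, hA0⟩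
  have hAbdd : BddAbove A := ⟨t₀, fun t ht => ht.1.2⟩
  have hcont' : ContinuousOn u (Set.Icc (0:ℝ) t₀) :=
    hcont.mono (Set.Icc_subset_Ici_self)
  have hAclosed : IsClosed A :=
    hcont'.preimage_isClosed_of_isClosed isClosed_Icc isClosed_Ici
  set τ := sSup A with hτdef
  have hτA : τ ∈ A := hAclosed.csSup_mem hAne hAbdd
  have hτIcc : τ ∈ Set.Icc (0:ℝ) t₀ := hτA.1
  have huτ : 0 ≤ u τ := hτA.2
  -- u τ = 0
  have huτ0 : u τ = 0 := by
    by_contra hne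
    have hpos : 0 < u τ := lt_of_le_of_ne huτ (Ne.symm hne)
    have hτlt : τ < t₀ := by
      rcases lt_or_eq_of_le hτIcc.2 with h | h
      · exact h
      · exact absurd (h ▸ hpos) (not_lt.2 hneg.le)
    have hca : ContinuousAt u τ := (hu τ (le_trans hτIcc.1 (le_refl τ))).continuousAt
    have := hca.eventually (eventually_gt_nhds hpos)
    rcases Metric.eventually_nhds_iff.1 this with ⟨δ, hδ, hball⟩
    set t₁ := min (τ + δ/2) t₀ with ht₁
    have ht₁τ : τ < t₁ := lt_min (by linarith) hτlt
    have hd : |t₁ - τ| < δ := by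
      have hub : t₁ ≤ τ + δ/2 := min_le_left _ _
      rw [abs_lt]
      constructor
      · linarith
      · linarith
    have hut₁ : 0 < u t₁ := hball (by simpa [Real.dist_eq] using hd)
    have : t₁ ∈ A := ⟨⟨le_trans hτIcc.1 ht₁τ.le, min_le_right _ _⟩, hut₁.le⟩
    exact absurd (le_csSup hAbdd this) (not_le.2 ht₁τ)
  -- Grönwall on [τ, t₀]
  obtain ⟨K, hK⟩ := hc t₀
  have hsub : Set.Icc τ t₀ ⊆ Set.Icc 0 t₀ := Set.Icc_subset_Icc hτIcc.1 (le_refl _)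
  have hgr := norm_le_gronwallBound_of_norm_deriv_right_le (f := u)
      (f' := fun t => c t * u t) (δ := 0) (K := K) (ε := 0) (a := τ) (b := t₀)
      (hcont'.mono hsub)
      (fun s hs => ((hu s (le_trans hτIcc.1 hs.1)).hasDerivWithinAt))
      (by simp [huτ0])
      (fun s hs => by
        have hb := hK s (hsub (Set.Ico_subset_Icc_self hs))
        have h5 : ‖c s * u s‖ ≤ K * ‖u s‖ + 0 := by
          rw [Real.norm_eq_abs, Real.norm_eq_abs, abs_mul, add_zero]
          exact mul_le_mul_of_nonneg_right hb (abs_nonneg _)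
        exact h5)
  have := hgr t₀ ⟨hτIcc.2, le_refl _⟩
  rw [gronwallBound_ε0_δ0] at this
  have : u t₀ = 0 := by
    have h2 : |u t₀| ≤ 0 := by simpa using this
    exact abs_eq_zero.1 (le_antisymm h2 (abs_nonneg _))
  linarith

/-- The infected population tends to zero. -/
theorem sir_infected_tendsto_zero
    (β γ α S I : ℝ → ℝ) (β₁ β₂ γ₁ γ₂ x y : ℝ)
    (hβ₁ : 0 < β₁) (hβ₁₂ : β₁ ≤ β₂) (hγ₁ : 0 < γ₁) (hγ₁₂ : γ₁ ≤ γ₂)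
    (hβc : Continuous β) (hγc : Continuous γ)
    (hβ : ∀ t ≥ (0:ℝ), β t ∈ Set.Icc β₁ β₂)
    (hγ : ∀ t ≥ (0:ℝ), γ t ∈ Set.Icc γ₁ γ₂)
    (hαm : Measurable α) (hα : ∀ t ≥ (0:ℝ), α t ∈ Set.Icc (0:ℝ) 1)
    (hS : ∀ t ∈ Set.Ici (0:ℝ), HasDerivAt S (-(β t) * S t * I t - α t * S t) t)
    (hI : ∀ t ∈ Set.Ici (0:ℝ), HasDerivAt I (β t * S t * I t - γ t * I t) t)
    (hS0 : S 0 = x) (hI0 : I 0 = y) (hx : 0 ≤ x) (hy : 0 ≤ y) :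
    Filter.Tendsto I Filter.atTop (nhds 0) := by
  have hScont : ContinuousOn S (Set.Ici (0:ℝ)) :=
    fun t ht => ((hS t ht).continuousAt).continuousWithinAt
  have hIcont : ContinuousOn I (Set.Ici (0:ℝ)) :=
    fun t ht => ((hI t ht).continuousAt).continuousWithinAt
  -- nonnegativity of I
  have hInn : ∀ t ∈ Set.Ici (0:ℝ), 0 ≤ I t := by
    apply nonneg_of_linear_ode I (fun t => β t * S t - γ t)
    · intro t ht
      have := hI t ht
      convert this using 1; ring
    · intro b
      rcases le_or_gt 0 b with hb | hb
      · obtain ⟨M, hM⟩ := (isCompact_Icc (a := (0:ℝ)) (b := b)).exists_bound_of_continuousOn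
          (hScont.mono Set.Icc_subset_Ici_self)
        refine ⟨β₂ * M + γ₂, fun t ht => ?_⟩
        have hβt := hβ t ht.1
        have hγt := hγ t ht.1
        have hMt := hM t ht
        have hM0 : 0 ≤ M := le_trans (norm_nonneg _) hMt
        have h1 : |β t * S t - γ t| ≤ |β t| * |S t| + |γ t| := by
          calc |β t * S t - γ t| ≤ |β t * S t| + |γ t| := abs_sub _ _
            _ = |β t| * |S t| + |γ t| := by rw [abs_mul]
        have h2 : |β t| ≤ β₂ := by
          rw [abs_of_pos (lt_of_lt_of_le hβ₁ hβt.1)]; exact hβt.2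
        have h3 : |γ t| ≤ γ₂ := by
          rw [abs_of_pos (lt_of_lt_of_le hγ₁ hγt.1)]; exact hγt.2
        have h4 : |S t| ≤ M := hMt
        calc |β t * S t - γ t| ≤ |β t| * |S t| + |γ t| := h1
          _ ≤ β₂ * M + γ₂ := by
            gcongr
            exact le_trans (abs_nonneg _) h2
      · exact ⟨0, fun t ht => absurd (le_trans ht.1 ht.2) (not_le.2 hb)⟩
    · rw [hI0]; exact hy
  -- nonnegativity of S
  have hSnn : ∀ t ∈ Set.Ici (0:ℝ), 0 ≤ S t := by
    apply nonneg_of_linear_ode S (fun t => -(β t * I t) - α t)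
    · intro t ht
      have := hS t ht
      convert this using 1; ring
    · intro b
      rcases le_or_gt 0 b with hb | hb
      · obtain ⟨M, hM⟩ := (isCompact_Icc (a := (0:ℝ)) (b := b)).exists_bound_of_continuousOn
          (hIcont.mono Set.Icc_subset_Ici_self)
        refine ⟨β₂ * M + 1, fun t ht => ?_⟩
        have hβt := hβ t ht.1
        have hαt := hα t ht.1
        have hMt := hM t ht
        have h2 : |β t| ≤ β₂ := by
          rw [abs_of_pos (lt_of_lt_of_le hβ₁ hβt.1)]; exact hβt.2
        have h3 : |α t| ≤ 1 := by
          rw [abs_of_nonneg hαt.1]; exact hαt.2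
        have h4 : |I t| ≤ M := hMt
        calc |(-(β t * I t) - α t)| ≤ |β t * I t| + |α t| := by
              simpa [abs_neg] using abs_sub (-(β t * I t)) (α t)
          _ = |β t| * |I t| + |α t| := by rw [abs_mul]
          _ ≤ β₂ * M + 1 := by
            gcongr
            exact le_trans (abs_nonneg _) h2
      · exact ⟨0, fun t ht => absurd (le_trans ht.1 ht.2) (not_le.2 hb)⟩
    · rw [hS0]; exact hx
  -- S is antitone on [0, ∞)
  have hSderiv : ∀ t ∈ Set.Ioi (0:ℝ), deriv S t = -(β t) * S t * I t - α t * S t :=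
    fun t ht => (hS t (Set.mem_Ici.2 (le_of_lt ht))).deriv
  have hSanti : AntitoneOn S (Set.Ici (0:ℝ)) := by
    apply antitoneOn_of_deriv_nonpos (convex_Ici 0) hScont
    · rw [interior_Ici]
      exact fun t ht => ((hS t (Set.mem_Ici.2 (le_of_lt ht))).differentiableAt).differentiableWithinAt
    · rw [interior_Ici]
      intro t ht
      rw [hSderiv t ht]
      have hβt := hβ t (le_of_lt ht)
      have hαt := hα t (le_of_lt ht)
      have h1 : 0 ≤ β t * S t * I t := by
        apply mul_nonneg (mul_nonneg (le_trans hβ₁.le hβt.1) (hSnn t (Set.mem_Ici.2 (le_of_lt ht))))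
        exact hInn t (Set.mem_Ici.2 (le_of_lt ht))
      have h2 : 0 ≤ α t * S t := mul_nonneg hαt.1 (hSnn t (Set.mem_Ici.2 (le_of_lt ht)))
      nlinarith
  -- g = S + I is antitone on [0, ∞)
  set g : ℝ → ℝ := fun t => S t + I t with hg
  have hgderivAt : ∀ t ∈ Set.Ici (0:ℝ), HasDerivAt g (-(α t * S t) - γ t * I t) t := by
    intro t ht
    have := (hS t ht).add (hI t ht)
    rw [show -(α t * S t) - γ t * I t = (-(β t) * S t * I t - α t * S t) + (β t * S t * I t - γ t * I t) by ring]
    exact this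
  have hgcont : ContinuousOn g (Set.Ici (0:ℝ)) := hScont.add hIcont
  have hgnn : ∀ t ∈ Set.Ici (0:ℝ), 0 ≤ g t :=
    fun t ht => add_nonneg (hSnn t ht) (hInn t ht)
  have hganti : AntitoneOn g (Set.Ici (0:ℝ)) := by
    apply antitoneOn_of_deriv_nonpos (convex_Ici 0) hgcont
    · rw [interior_Ici]
      exact fun t ht => ((hgderivAt t (Set.mem_Ici.2 (le_of_lt ht))).differentiableAt).differentiableWithinAt
    · rw [interior_Ici]
      intro t ht
      rw [(hgderivAt t (Set.mem_Ici.2 (le_of_lt ht))).deriv]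
      have hγt := hγ t (le_of_lt ht)
      have hαt := hα t (le_of_lt ht)
      have h1 : 0 ≤ α t * S t := mul_nonneg hαt.1 (hSnn t (Set.mem_Ici.2 (le_of_lt ht)))
      have h2 : 0 ≤ γ t * I t :=
        mul_nonneg (le_trans hγ₁.le hγt.1) (hInn t (Set.mem_Ici.2 (le_of_lt ht)))
      linarith
  -- truncated functions
  set Sm : ℝ → ℝ := fun t => S (max t 0) with hSm
  set gm : ℝ → ℝ := fun t => g (max t 0) with hgm
  have hSmAnti : Antitone Sm := fun s t hst =>
    hSanti (le_max_right s 0) (le_max_right t 0) (max_le_max hst (le_refl 0))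
  have hgmAnti : Antitone gm := fun s t hst =>
    hganti (le_max_right s 0) (le_max_right t 0) (max_le_max hst (le_refl 0))
  have hSmBdd : BddBelow (Set.range Sm) :=
    ⟨0, fun v ⟨t, ht⟩ => ht ▸ hSnn _ (le_max_right t 0)⟩
  have hgmBdd : BddBelow (Set.range gm) :=
    ⟨0, fun v ⟨t, ht⟩ => ht ▸ hgnn _ (le_max_right t 0)⟩
  have hSmlim := tendsto_atTop_ciInf hSmAnti hSmBdd
  have hgmlim := tendsto_atTop_ciInf hgmAnti hgmBdd
  set a := ⨅ i, Sm i
  set b := ⨅ i, gm i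
  have hImlim : Filter.Tendsto (fun t => I (max t 0)) Filter.atTop (nhds (b - a)) := by
    have := hgmlim.sub hSmlim
    convert this using 2 with t
    simp [hgm, hSm, hg]
  set c := b - a with hc
  have hcnn : 0 ≤ c :=
    ge_of_tendsto' hImlim (fun t => hInn _ (le_max_right t 0))
  -- c = 0
  have hc0 : c = 0 := by
    by_contra hne
    have hcpos : 0 < c := lt_of_le_of_ne hcnn (Ne.symm hne)
    have hev : ∀ᶠ t in Filter.atTop, c/2 < I (max t 0) :=
      hImlim.eventually (eventually_gt_nhds (by linarith))
    obtain ⟨T₀, hT₀⟩ := hev.exists_forall_of_atTop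
    set T := max T₀ 0 with hT
    have hT0 : (0:ℝ) ≤ T := le_max_right _ _
    have hIge : ∀ t ≥ T, c/2 ≤ I t := by
      intro t ht
      have h1 : T₀ ≤ t := le_trans (le_max_left _ _) ht
      have h2 := hT₀ t h1
      rw [max_eq_left (le_trans hT0 ht)] at h2
      exact h2.le
    -- h = g + (γ₁ c/2) t is antitone on [T,∞)
    set k := γ₁ * (c/2) with hk
    have hkpos : 0 < k := mul_pos hγ₁ (by linarith)
    set h : ℝ → ℝ := fun t => g t + k * t with hh
    have hhanti : AntitoneOn h (Set.Ici T) := by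
      apply antitoneOn_of_deriv_nonpos (convex_Ici T)
      · exact ((hgcont.mono (Set.Ici_subset_Ici.2 hT0)).add
          ((continuous_const.mul continuous_id).continuousOn))
      · rw [interior_Ici]
        intro t ht
        have ht' : (0:ℝ) ≤ t := le_trans hT0 (le_of_lt ht)
        have hd : HasDerivAt h ((-(α t * S t) - γ t * I t) + k) t := by
          have h1 : HasDerivAt (fun t => k * t) k t := by
            simpa using (hasDerivAt_id t).const_mul k
          exact (hgderivAt t ht').add h1
        exact hd.differentiableAt.differentiableWithinAt
      · rw [interior_Ici]
        intro t ht
        have ht' : (0:ℝ) ≤ t := le_trans hT0 (le_of_lt ht)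
        have hd : HasDerivAt h ((-(α t * S t) - γ t * I t) + k) t := by
          have h1 : HasDerivAt (fun t => k * t) k t := by
            simpa using (hasDerivAt_id t).const_mul k
          exact (hgderivAt t ht').add h1
        rw [hd.deriv]
        have hγt := hγ t ht'
        have hαt := hα t ht'
        have h1 : 0 ≤ α t * S t := mul_nonneg hαt.1 (hSnn t ht')
        have h2 : k ≤ γ t * I t := by
          rw [hk]
          apply mul_le_mul hγt.1 (hIge t (le_of_lt ht)) (by linarith) (le_trans hγ₁.le hγt.1)
        linarith
    -- derive contradiction at large time
    set t₁ := T + (g T + 1) / k with ht₁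
    have ht₁T : T ≤ t₁ := by
      have h9 : 0 ≤ (g T + 1) / k :=
        div_nonneg (by have := hgnn T hT0; linarith) hkpos.le
      rw [ht₁]
      linarith
    have := hhanti (Set.self_mem_Ici) ht₁T ht₁T
    have hgt₁ : 0 ≤ g t₁ := hgnn t₁ (le_trans hT0 ht₁T)
    have hht : g t₁ + k * t₁ ≤ g T + k * T := this
    have hkt : k * t₁ = k * T + (g T + 1) := by
      rw [ht₁, mul_add, mul_div_cancel₀ _ (ne_of_gt hkpos)]
    linarith
  -- conclude
  rw [hc0] at hImlim
  apply hImlim.congr'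
  filter_upwards [Filter.eventually_ge_atTop (0:ℝ)] with t ht
  rw [max_eq_left ht]
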